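/- Let A be a finite connected graph with vertex set Q and let T = T_A be its universal covering tree. For vertices v₁, v₂ of T the following are equivalent: (i) the rooted trees T_{v₁} and T_{v₂} are isomorphic; (ii) for every d ∈ ℕ the truncated trees T_{v₁}^{(d)} and T_{v₂}^{(d)} are isomorphic; (iii) T_{v₁}^{(d)} and T_{v₂}^{(d)} are isomorphic for some d ≥ (|Q|+1)². -/

import Mathlib

/-- A rooted directed multigraph. -/
structure RGraph where
  V : Type
  E : Type
  s : E → V
  t : E → V
  root : V

namespace RGraph

/-- `l` is a path: consecutive edges are composable. -/
def IsPath (A : RGraph) (l : List A.E) : Prop :=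
  l.Chain' (fun e f => A.t e = A.s f)

/-- `l` is a path starting at the vertex `q`. -/
def PathFrom (A : RGraph) (q : A.V) (l : List A.E) : Prop :=
  A.IsPath l ∧ ∀ e ∈ l.head?, A.s e = q

/-- The target of the path `l` started at `q` (equal to `q` for the empty path). -/
def pathTarget (A : RGraph) (q : A.V) (l : List A.E) : A.V :=
  l.foldl (fun _ e => A.t e) q

@[simp] lemma pathTarget_nil (A : RGraph) (q : A.V) : A.pathTarget q [] = q := rfl

@[simp] lemma pathTarget_cons (A : RGraph) (q : A.V) (a : A.E) (l : List A.E) :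
    A.pathTarget q (a :: l) = A.pathTarget (A.t a) l := rfl

lemma pathTarget_append (A : RGraph) (q : A.V) (l l' : List A.E) :
    A.pathTarget q (l ++ l') = A.pathTarget (A.pathTarget q l) l' := by
  simp [pathTarget]

@[simp] lemma pathTarget_append_single (A : RGraph) (q : A.V) (l : List A.E) (e : A.E) :
    A.pathTarget q (l ++ [e]) = A.t e := by
  rw [pathTarget_append]; rfl

lemma pathFrom_nil (A : RGraph) (q : A.V) : A.PathFrom q [] :=
  ⟨List.isChain_nil, by simp⟩

lemma pathTarget_getLast {A : RGraph} {q : A.V} {l : List A.E} {x : A.E}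
    (hx : x ∈ l.getLast?) : A.pathTarget q l = A.t x := by
  induction l generalizing q with
  | nil => simp at hx
  | cons a l ih =>
    cases l with
    | nil => simp at hx; subst hx; rfl
    | cons b l =>
      rw [List.getLast?_cons_cons] at hx
      simpa using ih (q := A.t a) hx

lemma pathFrom_append_single {A : RGraph} {q : A.V} {l : List A.E} {e : A.E}
    (h : A.PathFrom q l) (he : A.s e = A.pathTarget q l) :
    A.PathFrom q (l ++ [e]) := by
  constructor
  · apply List.isChain_append.mpr
    refine ⟨h.1, List.isChain_singleton _, ?_⟩
    intro x hx y hy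
    simp at hy
    subst hy
    rw [he]
    exact (pathTarget_getLast hx).symm
  · intro f hf
    cases l with
    | nil =>
      simp at hf
      subst hf
      simpa using he
    | cons a l =>
      simp at hf
      subst hf
      exact h.2 a (by simp)

/-- `w` is reachable from `q` by an oriented path. -/
def Reach (A : RGraph) (q w : A.V) : Prop :=
  ∃ l, A.PathFrom q l ∧ A.pathTarget q l = w

lemma reach_self (A : RGraph) (q : A.V) : A.Reach q q :=
  ⟨[], A.pathFrom_nil q, rfl⟩

lemma reach_target {A : RGraph} {q : A.V} {e : A.E} (h : A.Reach q (A.s e)) :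
    A.Reach q (A.t e) := by
  obtain ⟨l, hl, ht⟩ := h
  exact ⟨l ++ [e], pathFrom_append_single hl ht.symm, by simp⟩

/-- A graph is connected (as a rooted directed graph) if every vertex is reachable
from the root. -/
def Connected (A : RGraph) : Prop := ∀ w : A.V, A.Reach A.root w

/-- A graph is a tree if the target map from paths emanating from the root to
vertices is a bijection. -/
def IsTree (A : RGraph) : Prop :=
  Function.Bijective
    (fun l : {l : List A.E // A.PathFrom A.root l} => A.pathTarget A.root l.1)

/-- A graph is locally finite if every vertex has finitely many outgoing edges. -/
def LocallyFinite (A : RGraph) : Prop := ∀ q : A.V, Finite {e : A.E // A.s e = q}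

/-- Adjacency: there is an edge from `v` to `w`. -/
def Adj (A : RGraph) (v w : A.V) : Prop := ∃ e, A.s e = v ∧ A.t e = w

/-- The induced rooted subgraph on all vertices reachable from `q` (the "cone" at `q`). -/
def subgraph (A : RGraph) (q : A.V) : RGraph where
  V := {w // A.Reach q w}
  E := {e // A.Reach q (A.s e)}
  s := fun e => ⟨A.s e.1, e.2⟩
  t := fun e => ⟨A.t e.1, reach_target e.2⟩
  root := ⟨q, A.reach_self q⟩

/-- The truncation of the cone at `v` to vertices at distance at most `d` from `v`. -/
def trunc (A : RGraph) (v : A.V) (d : ℕ) : RGraph where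
  V := {w // ∃ l, A.PathFrom v l ∧ A.pathTarget v l = w ∧ l.length ≤ d}
  E := {e // ∃ l, A.PathFrom v l ∧ A.pathTarget v l = A.s e ∧ l.length < d}
  s := fun e => ⟨A.s e.1, e.2.imp fun _ h => ⟨h.1, h.2.1, h.2.2.le⟩⟩
  t := fun e => ⟨A.t e.1, by
    obtain ⟨l, h1, h2, h3⟩ := e.2
    exact ⟨l ++ [e.1], pathFrom_append_single h1 h2.symm, by simp,
      by simp only [List.length_append, List.length_singleton]; omega⟩⟩
  root := ⟨v, [], A.pathFrom_nil v, rfl, Nat.zero_le d⟩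

/-- The universal covering tree of `A`: vertices are the paths emanating from the root. -/
def cover (A : RGraph) : RGraph where
  V := {l : List A.E // A.PathFrom A.root l}
  E := {x : {l : List A.E // A.PathFrom A.root l} × A.E //
          A.s x.2 = A.pathTarget A.root x.1.1}
  s := fun x => x.1.1
  t := fun x => ⟨x.1.1.1 ++ [x.1.2], pathFrom_append_single x.1.1.2 x.2⟩
  root := ⟨[], A.pathFrom_nil _⟩

end RGraph

/-- A morphism of rooted directed multigraphs. -/
structure GraphHom (A B : RGraph) where
  v : A.V → B.V
  e : A.E → B.E
  root_eq : v A.root = B.root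
  s_eq : ∀ x, B.s (e x) = v (A.s x)
  t_eq : ∀ x, B.t (e x) = v (A.t x)

namespace GraphHom

variable {A B : RGraph}

/-- The unique path lifting property. -/
def UPLP (p : GraphHom A B) : Prop :=
  ∀ (q : A.V) (l' : List B.E), B.PathFrom (p.v q) l' →
    ∃! l : List A.E, A.PathFrom q l ∧ l.map p.e = l'

/-- A covering morphism: surjective on vertices, with the unique path lifting property. -/
def IsCovering (p : GraphHom A B) : Prop := Function.Surjective p.v ∧ p.UPLP

/-- An isomorphism of graphs: bijective on vertices and on edges. -/
def IsIso (p : GraphHom A B) : Prop := Function.Bijective p.v ∧ Function.Bijective p.e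

/-- The restriction of the edge map to the edges emanating from `q`. -/
def outMap (p : GraphHom A B) (q : A.V) :
    {e : A.E // A.s e = q} → {e' : B.E // B.s e' = p.v q} :=
  fun e => ⟨p.e e.1, by rw [p.s_eq, e.2]⟩

lemma isPath_map (p : GraphHom A B) {l : List A.E} (h : A.IsPath l) :
    B.IsPath (l.map p.e) := by
  simp only [RGraph.IsPath, List.Chain'] at h ⊢
  rw [List.isChain_map]
  exact List.IsChain.imp (fun a b hab => by rw [p.t_eq, p.s_eq, hab]) h

lemma pathFrom_map (p : GraphHom A B) {q : A.V} {l : List A.E} (h : A.PathFrom q l) :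
    B.PathFrom (p.v q) (l.map p.e) := by
  refine ⟨p.isPath_map h.1, ?_⟩
  intro f hf
  cases l with
  | nil => simp at hf
  | cons a l =>
    simp at hf
    subst hf
    rw [p.s_eq, h.2 a (by simp)]

lemma pathTarget_map (p : GraphHom A B) (q : A.V) (l : List A.E) :
    B.pathTarget (p.v q) (l.map p.e) = p.v (A.pathTarget q l) := by
  induction l generalizing q with
  | nil => rfl
  | cons a l ih =>
    show B.pathTarget (B.t (p.e a)) (l.map p.e) = _
    rw [p.t_eq]
    exact ih (A.t a)

lemma reach_map (p : GraphHom A B) {q w : A.V} (h : A.Reach q w) :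
    B.Reach (p.v q) (p.v w) := by
  obtain ⟨l, hl, ht⟩ := h
  exact ⟨l.map p.e, p.pathFrom_map hl, by rw [p.pathTarget_map, ht]⟩

end GraphHom

/-- Two graphs are isomorphic. -/
def RGraph.Iso (A B : RGraph) : Prop := ∃ p : GraphHom A B, p.IsIso

/-- The universal covering morphism from the universal covering tree of `A` to `A`. -/
def RGraph.uCover (A : RGraph) : GraphHom A.cover A where
  v := fun l => A.pathTarget A.root l.1
  e := fun x => x.1.2
  root_eq := rfl
  s_eq := fun x => x.2
  t_eq := fun x => by
    show A.t x.1.2 = A.pathTarget A.root (x.1.1.1 ++ [x.1.2])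
    simp

/-- The morphism induced between universal covering trees by a morphism of graphs. -/
def GraphHom.coverMap {A B : RGraph} (p : GraphHom A B) : GraphHom A.cover B.cover where
  v := fun l => ⟨l.1.map p.e, by have := p.pathFrom_map l.2; rwa [p.root_eq] at this⟩
  e := fun x =>
    ⟨(⟨x.1.1.1.map p.e, by have := p.pathFrom_map x.1.1.2; rwa [p.root_eq] at this⟩,
      p.e x.1.2), by
        show B.s (p.e x.1.2) = B.pathTarget B.root (x.1.1.1.map p.e)
        rw [p.s_eq, x.2, ← p.root_eq, p.pathTarget_map]⟩
  root_eq := Subtype.ext rfl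
  s_eq := fun _ => rfl
  t_eq := fun x => by
    apply Subtype.ext
    simp [RGraph.cover]

/-- `A` is a covering quotient of `T`. -/
def IsCovQuotient (T A : RGraph) : Prop := ∃ p : GraphHom T A, p.IsCovering

/-- `A` is a minimal covering quotient of `T`: a covering quotient with the minimal
number of vertices among all covering quotients of `T`. -/
def IsMinCovQuotient (T A : RGraph) : Prop :=
  IsCovQuotient T A ∧
    ∀ B : RGraph, IsCovQuotient T B → Cardinal.mk A.V ≤ Cardinal.mk B.V

/-- `T` has finitely many cone types. -/
def FinManyCones (T : RGraph) : Prop :=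
  ∃ S : Set T.V, S.Finite ∧ ∀ v : T.V, ∃ w ∈ S, RGraph.Iso (T.subgraph v) (T.subgraph w)

/-- A self-similar tree: a locally finite tree with finitely many cone types. -/
def SelfSimilarTree (T : RGraph) : Prop := T.IsTree ∧ T.LocallyFinite ∧ FinManyCones T

namespace RGraph

/-- The automorphism group of a graph, realized as the group of root-preserving,
adjacency-preserving permutations of the vertex set (for trees this is the same as the
automorphism group in the sense of graph morphisms, since in a tree an edge is determined
by its endpoints). -/
def autGroup (T : RGraph) : Subgroup (Equiv.Perm T.V) where
  carrier := {g | g T.root = T.root ∧ ∀ v w, T.Adj v w ↔ T.Adj (g v) (g w)}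
  one_mem' := ⟨rfl, fun _ _ => Iff.rfl⟩
  mul_mem' := by
    rintro a b ⟨ha1, ha2⟩ ⟨hb1, hb2⟩
    refine ⟨?_, fun v w => ?_⟩
    · show a (b T.root) = T.root
      rw [hb1, ha1]
    · exact (hb2 v w).trans (ha2 (b v) (b w))
  inv_mem' := by
    rintro a ⟨ha1, ha2⟩
    refine ⟨?_, fun v w => ?_⟩
    · show a.symm T.root = T.root
      rw [Equiv.symm_apply_eq]
      exact ha1.symm
    · have h := ha2 (a⁻¹ v) (a⁻¹ w)
      simpa using h.symm

/-- The subgroup of permutations of the vertices fixing every vertex outside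
of the cone at `v`. -/
def fixOutside (T : RGraph) (v : T.V) : Subgroup (Equiv.Perm T.V) where
  carrier := {g | ∀ w, ¬ T.Reach v w → g w = w}
  one_mem' := fun _ _ => rfl
  mul_mem' := by
    intro a b ha hb w hw
    show a (b w) = w
    rw [hb w hw, ha w hw]
  inv_mem' := by
    intro a ha w hw
    show a.symm w = w
    rw [Equiv.symm_apply_eq]
    exact (ha w hw).symm

/-- The rigid stabilizer of the vertex `v`: automorphisms fixing every vertex
outside the subtree spanned by `v` and its descendants. -/
def rist (T : RGraph) (v : T.V) : Subgroup (Equiv.Perm T.V) :=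
  T.autGroup ⊓ T.fixOutside v

/-- The set of vertices at distance `n` from the root. -/
def level (T : RGraph) (n : ℕ) : Set T.V :=
  {v | ∃ l : List T.E, T.PathFrom T.root l ∧ T.pathTarget T.root l = v ∧ l.length = n}

/-- The `n`-th rigid level stabilizer: the subgroup generated by the rigid stabilizers
of the vertices at distance `n` from the root. -/
def ristLevel (T : RGraph) (n : ℕ) : Subgroup (Equiv.Perm T.V) :=
  ⨆ v ∈ T.level n, T.rist v

/-- The `n`-th rigid level stabilizer, as a subgroup of the automorphism group. -/
def ristIn (T : RGraph) (n : ℕ) : Subgroup ↥T.autGroup :=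
  (T.ristLevel n).comap T.autGroup.subtype

end RGraph

/-- A recurrent double edge: a pair of distinct parallel edges such that there is an
oriented loop which contains one of them, or from which their common source can be
reached. -/
def HasRecDoubleEdge (A : RGraph) : Prop :=
  ∃ e₁ e₂ : A.E, e₁ ≠ e₂ ∧ A.s e₁ = A.s e₂ ∧ A.t e₁ = A.t e₂ ∧
    ((∃ (q : A.V) (l : List A.E),
        A.PathFrom q l ∧ l ≠ [] ∧ A.pathTarget q l = q ∧ (e₁ ∈ l ∨ e₂ ∈ l)) ∨
     (∃ (q : A.V) (l : List A.E),
        A.PathFrom q l ∧ l ≠ [] ∧ A.pathTarget q l = q ∧ A.Reach q (A.s e₁)))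

/-- A deterministic finite automaton over the alphabet `A`, with a partial transition
function, a single initial state, and all states accepting. -/
structure PDFA (A : Type) where
  Q : Type
  finQ : Finite Q
  neQ : Nonempty Q
  δ : Q → A → Option Q
  init : Q

namespace PDFA

variable {A : Type} (M : PDFA A)

/-- Running the automaton from state `q` on a word; `none` if it gets stuck. -/
def run : M.Q → List A → Option M.Q
  | q, [] => some q
  | q, a :: w => (M.δ q a).bind fun q' => run q' w

/-- The regular language accepted by `M`. -/
def Lang : Set (List A) := {w | (M.run M.init w).isSome}

lemma run_append (q : M.Q) (u w : List A) :
    M.run q (u ++ w) = (M.run q u).bind fun q' => M.run q' w := by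
  induction u generalizing q with
  | nil => simp [run]
  | cons a u ih =>
    simp only [List.cons_append, run]
    cases M.δ q a with
    | none => simp
    | some q' => simp [ih]

lemma isSome_of_append {q : M.Q} {u w : List A}
    (h : (M.run q (u ++ w)).isSome) : (M.run q u).isSome := by
  rw [run_append] at h
  cases hu : M.run q u with
  | none => rw [hu] at h; simp at h
  | some q' => simp

/-- The path language tree of `M`: the tree whose vertices are the words of the
language of `M`, with an edge from `w` to `w ++ [a]` whenever both belong to the
language. -/
def pathTree : RGraph where
  V := {w : List A // (M.run M.init w).isSome}
  E := {x : List A × A // (M.run M.init (x.1 ++ [x.2])).isSome}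
  s := fun x => ⟨x.1.1, M.isSome_of_append x.2⟩
  t := fun x => ⟨x.1.1 ++ [x.1.2], x.2⟩
  root := ⟨[], by simp [run]⟩

/-- The underlying rooted directed multigraph of the automaton `M`. -/
def underlying : RGraph where
  V := M.Q
  E := {x : M.Q × A // (M.δ x.1 x.2).isSome}
  s := fun x => x.1.1
  t := fun x => (M.δ x.1.1 x.1.2).get x.2
  root := M.init

/-- `M` is geometrically minimal: it has the minimal number of states among all DFAs
(over arbitrary finite nonempty alphabets) whose path language trees are isomorphic,
as unlabelled rooted trees, to the path language tree of `M`. -/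
def GeomMinimal : Prop :=
  ∀ (B : Type), Finite B → Nonempty B → ∀ N : PDFA B,
    RGraph.Iso M.pathTree N.pathTree → Nat.card M.Q ≤ Nat.card N.Q

/-- The state reached after reading the word `w` of the language. -/
def qstate (w : List A) (h : (M.run M.init w).isSome) : M.Q :=
  (M.run M.init w).get h

/-- The group of admissible permutations at the state `q`: permutations `τ` of the
alphabet fixing the letters outside `Σ(q)` and satisfying `δ(q, τ a) = δ(q, a)`. -/
def SymQ (q : M.Q) : Subgroup (Equiv.Perm A) where
  carrier := {τ | ∀ a, M.δ q (τ a) = M.δ q a ∧ (M.δ q a = none → τ a = a)}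
  one_mem' := fun _ => ⟨rfl, fun _ => rfl⟩
  mul_mem' := by
    intro τ₁ τ₂ h1 h2 a
    constructor
    · show M.δ q (τ₁ (τ₂ a)) = M.δ q a
      rw [(h1 (τ₂ a)).1, (h2 a).1]
    · intro hn
      show τ₁ (τ₂ a) = a
      rw [(h2 a).2 hn, (h1 a).2 hn]
  inv_mem' := by
    intro τ h a
    have h1 := (h (τ.symm a)).1
    rw [Equiv.apply_symm_apply] at h1
    constructor
    · show M.δ q (τ.symm a) = M.δ q a
      exact h1.symm
    · intro hn
      have h2 := (h (τ.symm a)).2 (h1.symm.trans hn)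
      rw [Equiv.apply_symm_apply] at h2
      show τ.symm a = a
      exact h2.symm

end PDFA

/-- Extending a portrait to a map on words (the first argument is the accumulated
prefix): the `i`-th letter of the image word is the image of the `i`-th letter under
the local injection at the prefix of length `i - 1`. -/
def portraitExtend {A : Type} (σ : List A → A → A) : List A → List A → List A
  | _, [] => []
  | pre, a :: w => σ pre a :: portraitExtend σ (pre ++ [a]) w

/-! ### Auxiliary machinery for Statement 12 -/

namespace RGraph

variable {A : RGraph}

lemma pathFrom_cons_iff {q : A.V} {e : A.E} {l : List A.E} :
    A.PathFrom q (e :: l) ↔ A.s e = q ∧ A.PathFrom (A.t e) l := by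
  constructor
  · rintro ⟨hc, hh⟩
    simp only [IsPath, List.Chain', List.isChain_cons] at hc
    exact ⟨hh e (by simp), hc.2, fun f hf => (hc.1 f hf).symm⟩
  · rintro ⟨he, hp, hh⟩
    refine ⟨?_, by simpa using he⟩
    show List.Chain' _ (e :: l)
    exact List.isChain_cons.mpr ⟨fun f hf => (hh f hf).symm, hp⟩

lemma pathFrom_append_iff {q : A.V} {u l : List A.E} :
    A.PathFrom q (u ++ l) ↔ A.PathFrom q u ∧ A.PathFrom (A.pathTarget q u) l := by
  induction u generalizing q with
  | nil =>
    simp only [List.nil_append, pathTarget_nil]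
    exact ⟨fun h => ⟨A.pathFrom_nil q, h⟩, fun h => h.2⟩
  | cons a u ih =>
    rw [List.cons_append, pathFrom_cons_iff, pathFrom_cons_iff, ih, pathTarget_cons,
      and_assoc]

/-- The tree of paths of `A` emanating from `q` (so that `A.cover = A.pathsT A.root`). -/
def pathsT (A : RGraph) (q : A.V) : RGraph where
  V := {l : List A.E // A.PathFrom q l}
  E := {x : {l : List A.E // A.PathFrom q l} × A.E //
          A.s x.2 = A.pathTarget q x.1.1}
  s := fun x => x.1.1
  t := fun x => ⟨x.1.1.1 ++ [x.1.2], pathFrom_append_single x.1.1.2 x.2⟩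
  root := ⟨[], A.pathFrom_nil _⟩

lemma cover_eq_pathsT (A : RGraph) : A.cover = A.pathsT A.root := rfl

/-- The truncated tree of paths of `A` emanating from `q`, of length at most `d`. -/
def truncT (A : RGraph) (q : A.V) (d : ℕ) : RGraph where
  V := {l : List A.E // A.PathFrom q l ∧ l.length ≤ d}
  E := {x : List A.E × A.E //
          A.PathFrom q x.1 ∧ A.s x.2 = A.pathTarget q x.1 ∧ x.1.length < d}
  s := fun x => ⟨x.1.1, x.2.1, x.2.2.2.le⟩
  t := fun x => ⟨x.1.1 ++ [x.1.2], pathFrom_append_single x.2.1 x.2.2.1,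
    by simp only [List.length_append, List.length_singleton]; omega⟩
  root := ⟨[], A.pathFrom_nil q, Nat.zero_le d⟩

end RGraph


namespace GraphHom

variable {A B C : RGraph}

/-- Composition of graph homomorphisms. -/
def comp (p : GraphHom A B) (r : GraphHom B C) : GraphHom A C where
  v := r.v ∘ p.v
  e := r.e ∘ p.e
  root_eq := by simp [p.root_eq, r.root_eq]
  s_eq := fun x => by simp [r.s_eq, p.s_eq]
  t_eq := fun x => by simp [r.t_eq, p.t_eq]

/-- The inverse of an isomorphism. -/
noncomputable def invHom (p : GraphHom A B) (h : p.IsIso) : GraphHom B A where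
  v := (Equiv.ofBijective p.v h.1).symm
  e := (Equiv.ofBijective p.e h.2).symm
  root_eq := by
    rw [Equiv.symm_apply_eq]
    exact p.root_eq.symm
  s_eq := fun x => by
    apply h.1.1
    have h1 : p.v ((Equiv.ofBijective p.v h.1).symm (B.s x)) = B.s x :=
      (Equiv.ofBijective p.v h.1).apply_symm_apply (B.s x)
    have h2 : p.e ((Equiv.ofBijective p.e h.2).symm x) = x :=
      (Equiv.ofBijective p.e h.2).apply_symm_apply x
    rw [h1, ← p.s_eq, h2]
  t_eq := fun x => by
    apply h.1.1
    have h1 : p.v ((Equiv.ofBijective p.v h.1).symm (B.t x)) = B.t x :=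
      (Equiv.ofBijective p.v h.1).apply_symm_apply (B.t x)
    have h2 : p.e ((Equiv.ofBijective p.e h.2).symm x) = x :=
      (Equiv.ofBijective p.e h.2).apply_symm_apply x
    rw [h1, ← p.t_eq, h2]

lemma invHom_isIso (p : GraphHom A B) (h : p.IsIso) : (p.invHom h).IsIso :=
  ⟨(Equiv.ofBijective p.v h.1).symm.bijective, (Equiv.ofBijective p.e h.2).symm.bijective⟩

@[simp] lemma invHom_v_v (p : GraphHom A B) (h : p.IsIso) (a : A.V) :
    (p.invHom h).v (p.v a) = a :=
  (Equiv.ofBijective p.v h.1).symm_apply_apply a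

@[simp] lemma v_invHom_v (p : GraphHom A B) (h : p.IsIso) (b : B.V) :
    p.v ((p.invHom h).v b) = b :=
  (Equiv.ofBijective p.v h.1).apply_symm_apply b

@[simp] lemma invHom_e_e (p : GraphHom A B) (h : p.IsIso) (a : A.E) :
    (p.invHom h).e (p.e a) = a :=
  (Equiv.ofBijective p.e h.2).symm_apply_apply a

@[simp] lemma e_invHom_e (p : GraphHom A B) (h : p.IsIso) (b : B.E) :
    p.e ((p.invHom h).e b) = b :=
  (Equiv.ofBijective p.e h.2).apply_symm_apply b

end GraphHom

namespace RGraph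

lemma Iso.refl (A : RGraph) : RGraph.Iso A A :=
  ⟨⟨id, id, rfl, fun _ => rfl, fun _ => rfl⟩, Function.bijective_id, Function.bijective_id⟩

lemma Iso.symm {A B : RGraph} (h : RGraph.Iso A B) : RGraph.Iso B A := by
  obtain ⟨p, hp⟩ := h
  exact ⟨p.invHom hp, p.invHom_isIso hp⟩

lemma Iso.trans {A B C : RGraph} (h : RGraph.Iso A B) (h' : RGraph.Iso B C) :
    RGraph.Iso A C := by
  obtain ⟨p, hp⟩ := h
  obtain ⟨r, hr⟩ := h'
  exact ⟨p.comp r, hr.1.comp hp.1, hr.2.comp hp.2⟩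

end RGraph


namespace RGraph

variable {A : RGraph}

lemma pathsT_path_fwd {q : A.V} :
    ∀ (L : List (A.pathsT q).E) (v : (A.pathsT q).V), (A.pathsT q).PathFrom v L →
    ∃ l : List A.E, A.PathFrom (A.pathTarget q v.1) l ∧
      ((A.pathsT q).pathTarget v L).1 = v.1 ++ l ∧ l.length = L.length := by
  intro L
  induction L with
  | nil => exact fun v _ => ⟨[], A.pathFrom_nil _, by simp, rfl⟩
  | cons a L ih =>
    intro v hL
    rw [pathFrom_cons_iff] at hL
    obtain ⟨hsa, hL⟩ := hL
    obtain ⟨l, hl, ht, hlen⟩ := ih _ hL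
    have hv1 : a.1.1.1 = v.1 := congrArg Subtype.val hsa
    refine ⟨a.1.2 :: l, ?_, ?_, by simp [hlen]⟩
    · rw [pathFrom_cons_iff]
      refine ⟨by rw [a.2, hv1], ?_⟩
      have hta : ((A.pathsT q).t a).1 = a.1.1.1 ++ [a.1.2] := rfl
      rwa [hta, pathTarget_append_single] at hl
    · calc ((A.pathsT q).pathTarget v (a :: L)).1
          = ((A.pathsT q).pathTarget ((A.pathsT q).t a) L).1 := by rw [pathTarget_cons]
        _ = (a.1.1.1 ++ [a.1.2]) ++ l := ht
        _ = v.1 ++ (a.1.2 :: l) := by rw [hv1]; simp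

lemma pathsT_path_bwd {q : A.V} :
    ∀ (l : List A.E) (v : (A.pathsT q).V), A.PathFrom (A.pathTarget q v.1) l →
    ∃ L : List (A.pathsT q).E, (A.pathsT q).PathFrom v L ∧
      ((A.pathsT q).pathTarget v L).1 = v.1 ++ l ∧ L.length = l.length := by
  intro l
  induction l with
  | nil => exact fun v _ => ⟨[], pathFrom_nil _ _, by simp, rfl⟩
  | cons e l ih =>
    intro v hl
    rw [pathFrom_cons_iff] at hl
    obtain ⟨he, hl⟩ := hl
    have htar : A.pathTarget q ((A.pathsT q).t ⟨(v, e), he⟩).1 = A.t e := by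
      show A.pathTarget q (v.1 ++ [e]) = A.t e
      exact pathTarget_append_single ..
    obtain ⟨L, hL, ht, hlen⟩ := ih ((A.pathsT q).t ⟨(v, e), he⟩) (by rw [htar]; exact hl)
    refine ⟨⟨(v, e), he⟩ :: L, pathFrom_cons_iff.mpr ⟨rfl, hL⟩, ?_, by exact congrArg (· + 1) hlen⟩
    calc ((A.pathsT q).pathTarget v (⟨(v, e), he⟩ :: L)).1
        = ((A.pathsT q).pathTarget ((A.pathsT q).t ⟨(v, e), he⟩) L).1 := by
          rfl
      _ = (v.1 ++ [e]) ++ l := ht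
      _ = v.1 ++ (e :: l) := by simp

lemma reach_pathsT_iff {q : A.V} {v w : (A.pathsT q).V} :
    (A.pathsT q).Reach v w ↔
      ∃ l, A.PathFrom (A.pathTarget q v.1) l ∧ w.1 = v.1 ++ l := by
  constructor
  · rintro ⟨L, hL, ht⟩
    obtain ⟨l, hl, htar, _⟩ := pathsT_path_fwd L v hL
    exact ⟨l, hl, by rw [← ht]; exact htar⟩
  · rintro ⟨l, hl, hw⟩
    obtain ⟨L, hL, htar, _⟩ := pathsT_path_bwd l v hl
    exact ⟨L, hL, Subtype.ext (htar.trans hw.symm)⟩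

lemma subgraph_pathsT_iso (q : A.V) (v : (A.pathsT q).V) :
    RGraph.Iso ((A.pathsT q).subgraph v) (A.pathsT (A.pathTarget q v.1)) := by
  apply Iso.symm
  refine ⟨{
    v := fun l => ⟨⟨v.1 ++ l.1, pathFrom_append_iff.mpr ⟨v.2, l.2⟩⟩,
      reach_pathsT_iff.mpr ⟨l.1, l.2, rfl⟩⟩
    e := fun x => ⟨⟨(⟨v.1 ++ x.1.1.1, pathFrom_append_iff.mpr ⟨v.2, x.1.1.2⟩⟩, x.1.2), by
        show A.s x.1.2 = A.pathTarget q (v.1 ++ x.1.1.1)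
        rw [pathTarget_append]; exact x.2⟩,
      reach_pathsT_iff.mpr ⟨x.1.1.1, x.1.1.2, rfl⟩⟩
    root_eq := by apply Subtype.ext; apply Subtype.ext; simp [subgraph, pathsT]
    s_eq := fun x => rfl
    t_eq := fun x => by apply Subtype.ext; apply Subtype.ext; simp [subgraph, pathsT] },
    ?_, ?_⟩
  · constructor
    · intro l₁ l₂ h
      exact Subtype.ext (List.append_cancel_left
        (congrArg (fun z => z.1.1) h : v.1 ++ l₁.1 = v.1 ++ l₂.1))
    · rintro ⟨w, hr⟩
      obtain ⟨l, hl, hw⟩ := reach_pathsT_iff.mp hr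
      exact ⟨⟨l, hl⟩, Subtype.ext (Subtype.ext hw.symm)⟩
  · constructor
    · intro x₁ x₂ h
      have h1 : v.1 ++ x₁.1.1.1 = v.1 ++ x₂.1.1.1 := congrArg (fun z => z.1.1.1.1) h
      have h2 : x₁.1.2 = x₂.1.2 := congrArg (fun z => z.1.1.2) h
      exact Subtype.ext (Prod.ext (Subtype.ext (List.append_cancel_left h1)) h2)
    · rintro ⟨y, hr⟩
      obtain ⟨l, hl, hw⟩ := reach_pathsT_iff.mp hr
      refine ⟨⟨(⟨l, hl⟩, y.1.2), ?_⟩, ?_⟩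
      · show A.s y.1.2 = A.pathTarget (A.pathTarget q v.1) l
        rw [y.2, show y.1.1.1 = v.1 ++ l from hw, pathTarget_append]
      · exact Subtype.ext (Subtype.ext (Prod.ext (Subtype.ext hw.symm) rfl))

lemma trunc_pathsT_iso (q : A.V) (v : (A.pathsT q).V) (d : ℕ) :
    RGraph.Iso ((A.pathsT q).trunc v d) (A.truncT (A.pathTarget q v.1) d) := by
  apply Iso.symm
  refine ⟨{
    v := fun l => ⟨⟨v.1 ++ l.1, pathFrom_append_iff.mpr ⟨v.2, l.2.1⟩⟩, by
      obtain ⟨L, hL, ht, hlen⟩ := pathsT_path_bwd l.1 v l.2.1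
      exact ⟨L, hL, Subtype.ext ht, by rw [hlen]; exact l.2.2⟩⟩
    e := fun x => ⟨⟨(⟨v.1 ++ x.1.1, pathFrom_append_iff.mpr ⟨v.2, x.2.1⟩⟩, x.1.2), by
        show A.s x.1.2 = A.pathTarget q (v.1 ++ x.1.1)
        rw [pathTarget_append]; exact x.2.2.1⟩, by
      obtain ⟨L, hL, ht, hlen⟩ := pathsT_path_bwd x.1.1 v x.2.1
      exact ⟨L, hL, Subtype.ext ht, by rw [hlen]; exact x.2.2.2⟩⟩
    root_eq := by apply Subtype.ext; apply Subtype.ext; simp [trunc, pathsT, truncT]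
    s_eq := fun x => by apply Subtype.ext; apply Subtype.ext; simp [trunc, pathsT, truncT]
    t_eq := fun x => by apply Subtype.ext; apply Subtype.ext; simp [trunc, pathsT, truncT] },
    ?_, ?_⟩
  · constructor
    · intro l₁ l₂ h
      exact Subtype.ext (List.append_cancel_left
        (congrArg (fun z => z.1.1) h : v.1 ++ l₁.1 = v.1 ++ l₂.1))
    · rintro ⟨w, L, hL, ht, hlen⟩
      obtain ⟨l, hl, htar, hlen'⟩ := pathsT_path_fwd L v hL
      rw [ht] at htar
      exact ⟨⟨l, hl, by rw [hlen']; exact hlen⟩, Subtype.ext (Subtype.ext htar.symm)⟩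
  · constructor
    · intro x₁ x₂ h
      have h1 : v.1 ++ x₁.1.1 = v.1 ++ x₂.1.1 := congrArg (fun z => z.1.1.1.1) h
      have h2 : x₁.1.2 = x₂.1.2 := congrArg (fun z => z.1.1.2) h
      exact Subtype.ext (Prod.ext (List.append_cancel_left h1) h2)
    · rintro ⟨y, L, hL, ht, hlen⟩
      obtain ⟨l, hl, htar, hlen'⟩ := pathsT_path_fwd L v hL
      rw [ht] at htar
      have hw : y.1.1.1 = v.1 ++ l := htar
      refine ⟨⟨(l, y.1.2), hl, ?_, by rw [hlen']; exact hlen⟩, ?_⟩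
      · show A.s y.1.2 = A.pathTarget (A.pathTarget q v.1) l
        rw [y.2, hw, pathTarget_append]
      · exact Subtype.ext (Subtype.ext (Prod.ext (Subtype.ext hw.symm) rfl))

lemma pathsT_hom_length {q q' : A.V} (p : GraphHom (A.pathsT q) (A.pathsT q'))
    (w : (A.pathsT q).V) : (p.v w).1.length = w.1.length := by
  obtain ⟨L, hL, ht, hlen⟩ := pathsT_path_bwd w.1 (A.pathsT q).root (by exact w.2)
  have ht' : (A.pathsT q).pathTarget (A.pathsT q).root L = w := Subtype.ext (by exact ht.trans (List.nil_append _))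
  have hmap := p.pathFrom_map hL
  rw [p.root_eq] at hmap
  have htar := p.pathTarget_map (A.pathsT q).root L
  rw [p.root_eq, ht'] at htar
  obtain ⟨l, _, ht2, hlen2⟩ := pathsT_path_fwd (L.map p.e) (A.pathsT q').root hmap
  rw [htar] at ht2
  simp only [show ((A.pathsT q').root).1 = ([] : List A.E) from rfl, List.nil_append] at ht2
  rw [ht2]
  simp only [List.length_map] at hlen2
  omega

end RGraph


namespace RGraph

variable {A : RGraph}

lemma truncT_path_fwd {q : A.V} {D : ℕ} :
    ∀ (L : List (A.truncT q D).E) (v : (A.truncT q D).V), (A.truncT q D).PathFrom v L →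
    ∃ l : List A.E, A.PathFrom (A.pathTarget q v.1) l ∧
      ((A.truncT q D).pathTarget v L).1 = v.1 ++ l ∧ l.length = L.length := by
  intro L
  induction L with
  | nil => exact fun v _ => ⟨[], A.pathFrom_nil _, by simp, rfl⟩
  | cons a L ih =>
    intro v hL
    rw [pathFrom_cons_iff] at hL
    obtain ⟨hsa, hL⟩ := hL
    obtain ⟨l, hl, ht, hlen⟩ := ih _ hL
    have hv1 : a.1.1 = v.1 := congrArg Subtype.val hsa
    refine ⟨a.1.2 :: l, ?_, ?_, by simp [hlen]⟩
    · rw [pathFrom_cons_iff]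
      refine ⟨by rw [a.2.2.1, hv1], ?_⟩
      have hta : ((A.truncT q D).t a).1 = a.1.1 ++ [a.1.2] := rfl
      rwa [hta, pathTarget_append_single] at hl
    · calc ((A.truncT q D).pathTarget v (a :: L)).1
          = ((A.truncT q D).pathTarget ((A.truncT q D).t a) L).1 := by rw [pathTarget_cons]
        _ = (a.1.1 ++ [a.1.2]) ++ l := ht
        _ = v.1 ++ (a.1.2 :: l) := by rw [hv1]; simp

lemma truncT_path_bwd {q : A.V} {D : ℕ} :
    ∀ (l : List A.E) (v : (A.truncT q D).V), A.PathFrom (A.pathTarget q v.1) l →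
      v.1.length + l.length ≤ D →
    ∃ L : List (A.truncT q D).E, (A.truncT q D).PathFrom v L ∧
      ((A.truncT q D).pathTarget v L).1 = v.1 ++ l ∧ L.length = l.length := by
  intro l
  induction l with
  | nil => exact fun v _ _ => ⟨[], pathFrom_nil _ _, by simp, rfl⟩
  | cons e l ih =>
    intro v hl hlen
    rw [pathFrom_cons_iff] at hl
    obtain ⟨he, hl⟩ := hl
    simp only [List.length_cons] at hlen
    have hlt : v.1.length < D := by omega
    have ha : A.PathFrom q v.1 ∧ A.s e = A.pathTarget q v.1 ∧ v.1.length < D :=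
      ⟨v.2.1, he, hlt⟩
    set a : (A.truncT q D).E := ⟨(v.1, e), ha⟩ with hadef
    have htar : A.pathTarget q ((A.truncT q D).t a).1 = A.t e := by
      show A.pathTarget q (v.1 ++ [e]) = A.t e
      exact pathTarget_append_single ..
    have hlen' : ((A.truncT q D).t a).1.length + l.length ≤ D := by
      show (v.1 ++ [e]).length + l.length ≤ D
      simp only [List.length_append, List.length_singleton]
      omega
    obtain ⟨L, hL, ht, hlenL⟩ := ih ((A.truncT q D).t a) (by rw [htar]; exact hl) hlen'
    refine ⟨a :: L, pathFrom_cons_iff.mpr ⟨Subtype.ext rfl, hL⟩, ?_, by simp [hlenL]⟩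
    calc ((A.truncT q D).pathTarget v (a :: L)).1
        = ((A.truncT q D).pathTarget ((A.truncT q D).t a) L).1 := by rw [pathTarget_cons]
      _ = (v.1 ++ [e]) ++ l := ht
      _ = v.1 ++ (e :: l) := by simp

lemma reach_truncT_iff {q : A.V} {D : ℕ} {v w : (A.truncT q D).V} :
    (A.truncT q D).Reach v w ↔
      ∃ l, A.PathFrom (A.pathTarget q v.1) l ∧ w.1 = v.1 ++ l := by
  constructor
  · rintro ⟨L, hL, ht⟩
    obtain ⟨l, hl, htar, _⟩ := truncT_path_fwd L v hL
    rw [ht] at htar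
    exact ⟨l, hl, htar⟩
  · rintro ⟨l, hl, hw⟩
    have hb : v.1.length + l.length ≤ D := by
      have := w.2.2
      rw [hw, List.length_append] at this
      exact this
    obtain ⟨L, hL, htar, _⟩ := truncT_path_bwd l v hl hb
    exact ⟨L, hL, Subtype.ext (htar.trans hw.symm)⟩

lemma truncT_hom_length {q q' : A.V} {D D' : ℕ}
    (p : GraphHom (A.truncT q D) (A.truncT q' D'))
    (w : (A.truncT q D).V) : (p.v w).1.length = w.1.length := by
  obtain ⟨L, hL, ht, hlen⟩ := truncT_path_bwd w.1 (A.truncT q D).root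
    (by exact w.2.1)
    (by show ([] : List A.E).length + w.1.length ≤ D; simpa using w.2.2)
  have ht' : (A.truncT q D).pathTarget (A.truncT q D).root L = w :=
    Subtype.ext (by exact ht.trans (List.nil_append _))
  have hmap := p.pathFrom_map hL
  rw [p.root_eq] at hmap
  have htar := p.pathTarget_map (A.truncT q D).root L
  rw [p.root_eq, ht'] at htar
  obtain ⟨l, _, ht2, hlen2⟩ := truncT_path_fwd (L.map p.e) (A.truncT q' D').root hmap
  rw [htar] at ht2
  simp only [show ((A.truncT q' D').root).1 = ([] : List A.E) from rfl,
    List.nil_append] at ht2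
  rw [ht2]
  simp only [List.length_map] at hlen2
  omega

/-- Restriction of a morphism between path trees to the truncated path trees. -/
def truncRestrictHom {q q' : A.V} (p : GraphHom (A.pathsT q) (A.pathsT q'))
    (d : ℕ) : GraphHom (A.truncT q d) (A.truncT q' d) where
  v := fun l => ⟨(p.v ⟨l.1, l.2.1⟩).1, (p.v ⟨l.1, l.2.1⟩).2, by
    exact (pathsT_hom_length p _).le.trans l.2.2⟩
  e := fun x =>
    let y : (A.pathsT q).E := ⟨(⟨x.1.1, x.2.1⟩, x.1.2), x.2.2.1⟩
    ⟨((p.e y).1.1.1, (p.e y).1.2), (p.e y).1.1.2, (p.e y).2, by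
      have hs : ((p.e y).1.1 : {l : List A.E // A.PathFrom q' l}) = p.v ⟨x.1.1, x.2.1⟩ :=
        p.s_eq y
      rw [hs]; refine (pathsT_hom_length p _).trans_lt ?_
      exact x.2.2.2⟩
  root_eq := by
    apply Subtype.ext
    exact congrArg (Subtype.val : {l : List A.E // A.PathFrom q' l} → List A.E) p.root_eq
  s_eq := fun x => by
    apply Subtype.ext
    exact congrArg (Subtype.val : {l : List A.E // A.PathFrom q' l} → List A.E)
      (p.s_eq ⟨(⟨x.1.1, x.2.1⟩, x.1.2), x.2.2.1⟩)
  t_eq := fun x => by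
    apply Subtype.ext
    exact congrArg (Subtype.val : {l : List A.E // A.PathFrom q' l} → List A.E)
      (p.t_eq ⟨(⟨x.1.1, x.2.1⟩, x.1.2), x.2.2.1⟩)

lemma iso_truncT_of_iso_pathsT {q q' : A.V}
    (h : RGraph.Iso (A.pathsT q) (A.pathsT q')) (d : ℕ) :
    RGraph.Iso (A.truncT q d) (A.truncT q' d) := by
  obtain ⟨p, hp⟩ := h
  have keyv : ∀ l, (truncRestrictHom (p.invHom hp) d).v ((truncRestrictHom p d).v l) = l := by
    intro l
    apply Subtype.ext
    show ((p.invHom hp).v (p.v ⟨l.1, l.2.1⟩)).1 = l.1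
    exact congrArg Subtype.val (p.invHom_v_v hp _)
  have keyv' : ∀ l, (truncRestrictHom p d).v ((truncRestrictHom (p.invHom hp) d).v l) = l := by
    intro l
    apply Subtype.ext
    show (p.v ((p.invHom hp).v ⟨l.1, l.2.1⟩)).1 = l.1
    exact congrArg Subtype.val (p.v_invHom_v hp _)
  have keye : ∀ x, (truncRestrictHom (p.invHom hp) d).e ((truncRestrictHom p d).e x) = x := by
    intro x
    apply Subtype.ext
    show ((((p.invHom hp).e (p.e ⟨(⟨x.1.1, x.2.1⟩, x.1.2), x.2.2.1⟩)).1.1.1,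
          ((p.invHom hp).e (p.e ⟨(⟨x.1.1, x.2.1⟩, x.1.2), x.2.2.1⟩)).1.2) : _ × _) = x.1
    exact congrArg (fun z => (z.1.1.1, z.1.2)) (p.invHom_e_e hp _)
  have keye' : ∀ x, (truncRestrictHom p d).e ((truncRestrictHom (p.invHom hp) d).e x) = x := by
    intro x
    apply Subtype.ext
    show (((p.e ((p.invHom hp).e ⟨(⟨x.1.1, x.2.1⟩, x.1.2), x.2.2.1⟩)).1.1.1,
          (p.e ((p.invHom hp).e ⟨(⟨x.1.1, x.2.1⟩, x.1.2), x.2.2.1⟩)).1.2) : _ × _) = x.1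
    exact congrArg (fun z => (z.1.1.1, z.1.2)) (p.e_invHom_e hp _)
  exact ⟨truncRestrictHom p d,
    ⟨Function.LeftInverse.injective keyv, Function.RightInverse.surjective keyv'⟩,
    ⟨Function.LeftInverse.injective keye, Function.RightInverse.surjective keye'⟩⟩

end RGraph


namespace RGraph

variable {A : RGraph}

/-- The edges emanating from `q`, as a type. -/
def outE (A : RGraph) (q : A.V) : Type := {e : A.E // A.s e = q}

/-- `d`-step bisimilarity of vertices of `A`. -/
def R (A : RGraph) : ℕ → A.V → A.V → Prop
  | 0, _, _ => True
  | d + 1, q, q' => ∃ φ : A.outE q ≃ A.outE q', ∀ e, A.R d (A.t e.1) (A.t (φ e).1)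

lemma R_succ_imp {d : ℕ} : ∀ {q q' : A.V}, A.R (d + 1) q q' → A.R d q q' := by
  induction d with
  | zero => exact fun _ => trivial
  | succ d ih =>
    rintro q q' ⟨φ, h⟩
    exact ⟨φ, fun e => ih (h e)⟩

lemma R_of_le {d d' : ℕ} (hle : d' ≤ d) {q q' : A.V} (h : A.R d q q') : A.R d' q q' := by
  obtain ⟨k, rfl⟩ := Nat.exists_eq_add_of_le hle
  induction k with
  | zero => exact h
  | succ k ih => exact ih (Nat.le_add_right _ _) (R_succ_imp h)

/-- Full bisimilarity of vertices of `A`. -/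
def Sbis (A : RGraph) (q q' : A.V) : Prop := ∀ d, A.R d q q'

lemma Sbis_of_R_big [Finite A.V] {q q' : A.V} {d : ℕ}
    (hd : (Nat.card A.V) ^ 2 ≤ d) (h : A.R d q q') : A.Sbis q q' := by
  set n := Nat.card A.V with hn
  have stepP : ∀ k, (∀ a b : A.V, A.R k a b → A.R (k + 1) a b) →
      (∀ a b : A.V, A.R (k + 1) a b → A.R (k + 2) a b) := by
    rintro k hk a b ⟨φ, hφ⟩
    exact ⟨φ, fun e => hk _ _ (hφ e)⟩
  have hex : ∃ k, k ≤ n ^ 2 ∧ ∀ a b : A.V, A.R k a b → A.R (k + 1) a b := by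
    by_contra hcon
    push_neg at hcon
    have hcon' : ∀ k ≤ n ^ 2, ∃ a b : A.V, A.R k a b ∧ ¬ A.R (k + 1) a b := by
      intro k hk
      obtain ⟨a, b, hab⟩ := hcon k hk
      exact ⟨a, b, hab⟩
    set g : ℕ → ℕ := fun k => {p : A.V × A.V | A.R k p.1 p.2}.ncard with hg
    have hsub : ∀ k, {p : A.V × A.V | A.R (k + 1) p.1 p.2} ⊆
        {p : A.V × A.V | A.R k p.1 p.2} := fun k p hp => R_succ_imp hp
    have hdec : ∀ k ≤ n ^ 2, g (k + 1) < g k := by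
      intro k hk
      obtain ⟨a, b, h1, h2⟩ := hcon' k hk
      have hmem : (a, b) ∈ {p : A.V × A.V | A.R k p.1 p.2} := h1
      refine Set.ncard_lt_ncard ⟨hsub k, fun hle => h2 (hle hmem)⟩ (Set.toFinite _)
    have hchain : ∀ k, k ≤ n ^ 2 + 1 → g k + k ≤ g 0 := by
      intro k
      induction k with
      | zero => simp
      | succ k ih =>
        intro hk
        have h1 := ih (by omega)
        have h2 := hdec k (by omega)
        omega
    have hg0 : g 0 ≤ n ^ 2 := by
      have huniv : {p : A.V × A.V | A.R 0 p.1 p.2} = Set.univ :=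
        Set.eq_univ_of_forall (fun p => trivial)
      have : g 0 = Nat.card (A.V × A.V) := by rw [hg]; simp only [huniv, Set.ncard_univ]
      rw [this, Nat.card_prod, ← hn, ← sq]
    have := hchain (n ^ 2 + 1) le_rfl
    omega
  obtain ⟨k, hk, hP⟩ := hex
  have hPall : ∀ m, k ≤ m → ∀ a b : A.V, A.R m a b → A.R (m + 1) a b := by
    intro m hm
    induction m, hm using Nat.le_induction with
    | base => exact hP
    | succ m hm ih => exact stepP m ih
  have hup : ∀ m, d ≤ m → A.R m q q' := by
    intro m hm
    induction m, hm using Nat.le_induction with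
    | base => exact h
    | succ m hm ih => exact hPall m (by omega) q q' ih
  intro m
  rcases le_or_gt m d with hc | hc
  · exact R_of_le hc h
  · exact R_of_le (le_refl m) (hup m hc.le)

lemma Sbis_step [Finite A.E] {q q' : A.V} (h : A.Sbis q q') :
    ∃ φ : A.outE q ≃ A.outE q', ∀ e, A.Sbis (A.t e.1) (A.t (φ e).1) := by
  have hstep : ∀ d : ℕ, ∃ φ : A.outE q ≃ A.outE q',
      ∀ e, A.R d (A.t e.1) (A.t (φ e).1) := fun d => h (d + 1)
  choose Φ hΦ using hstep
  have hfin1 : Finite (A.outE q) := Subtype.finite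
  have hfin2 : Finite (A.outE q') := Subtype.finite
  have hfin : Finite (A.outE q ≃ A.outE q') := by
    exact Finite.of_injective (fun φ => (φ : A.outE q → A.outE q'))
      (fun φ₁ φ₂ h12 => Equiv.coe_fn_injective h12)
  obtain ⟨φ, hφ⟩ := Finite.exists_infinite_fiber Φ
  refine ⟨φ, fun e d => ?_⟩
  have hinf : (Φ ⁻¹' {φ}).Infinite := Set.infinite_coe_iff.mp hφ
  obtain ⟨m, hm, hlt⟩ := hinf.exists_gt d
  have hΦm : Φ m = φ := hm
  have := hΦ m e
  rw [hΦm] at this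
  exact R_of_le hlt.le this

end RGraph


namespace RGraph

variable {A : RGraph}

/-- A chosen bisimulation equivalence on outgoing edges. -/
noncomputable def bEquiv [Finite A.E] {q q' : A.V} (h : A.Sbis q q') :
    A.outE q ≃ A.outE q' := (Sbis_step h).choose

lemma bEquiv_spec [Finite A.E] {q q' : A.V} (h : A.Sbis q q') :
    ∀ e, A.Sbis (A.t e.1) (A.t ((bEquiv h) e).1) := (Sbis_step h).choose_spec

open scoped Classical in
/-- Transport of paths along the chosen bisimulation equivalences. -/
noncomputable def Ftrans [Finite A.E] : List A.E → ∀ (q q' : A.V), A.Sbis q q' → List A.E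
  | [], _, _, _ => []
  | e :: l, q, q', h =>
    if he : A.s e = q then
      (bEquiv h ⟨e, he⟩).1 ::
        Ftrans l (A.t e) (A.t ((bEquiv h ⟨e, he⟩)).1) (bEquiv_spec h ⟨e, he⟩)
    else []

@[simp] lemma Ftrans_nil [Finite A.E] {q q' : A.V} (h : A.Sbis q q') :
    Ftrans [] q q' h = [] := rfl

lemma Ftrans_cons [Finite A.E] {e : A.E} {l : List A.E} {q q' : A.V} {h : A.Sbis q q'}
    (he : A.s e = q) :
    Ftrans (e :: l) q q' h = (bEquiv h ⟨e, he⟩).1 ::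
      Ftrans l (A.t e) (A.t ((bEquiv h ⟨e, he⟩)).1) (bEquiv_spec h ⟨e, he⟩) := by
  simp only [Ftrans]
  rw [dif_pos he]

lemma Ftrans_congr [Finite A.E] (l : List A.E) {q q₂ q₂' : A.V} (hq : q₂ = q₂')
    (h : A.Sbis q q₂) : Ftrans l q q₂ h = Ftrans l q q₂' (hq ▸ h) := by
  cases hq; rfl

lemma Ftrans_length [Finite A.E] : ∀ (l : List A.E) {q q' : A.V} (h : A.Sbis q q'),
    A.PathFrom q l → (Ftrans l q q' h).length = l.length := by
  intro l
  induction l with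
  | nil => intro q q' h _; rfl
  | cons e l ih =>
    intro q q' h hp
    rw [pathFrom_cons_iff] at hp
    rw [Ftrans_cons hp.1]
    simp only [List.length_cons]
    rw [ih _ hp.2]

lemma Ftrans_path [Finite A.E] : ∀ (l : List A.E) {q q' : A.V} (h : A.Sbis q q'),
    A.PathFrom q l → A.PathFrom q' (Ftrans l q q' h) := by
  intro l
  induction l with
  | nil => intro q q' h _; exact A.pathFrom_nil q'
  | cons e l ih =>
    intro q q' h hp
    rw [pathFrom_cons_iff] at hp
    rw [Ftrans_cons hp.1, pathFrom_cons_iff]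
    exact ⟨(bEquiv h ⟨e, hp.1⟩).2, ih _ hp.2⟩

lemma Ftrans_S [Finite A.E] : ∀ (l : List A.E) {q q' : A.V} (h : A.Sbis q q'),
    A.PathFrom q l →
    A.Sbis (A.pathTarget q l) (A.pathTarget q' (Ftrans l q q' h)) := by
  intro l
  induction l with
  | nil => intro q q' h _; exact h
  | cons e l ih =>
    intro q q' h hp
    rw [pathFrom_cons_iff] at hp
    rw [Ftrans_cons hp.1, pathTarget_cons, pathTarget_cons]
    exact ih _ hp.2

lemma Ftrans_append [Finite A.E] : ∀ (l : List A.E) {f : A.E} {q q' : A.V}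
    (h : A.Sbis q q'), A.PathFrom q (l ++ [f]) →
    ∃ f', A.s f' = A.pathTarget q' (Ftrans l q q' h) ∧
      Ftrans (l ++ [f]) q q' h = Ftrans l q q' h ++ [f'] := by
  intro l
  induction l with
  | nil =>
    intro f q q' h hp
    simp only [List.nil_append] at hp ⊢
    rw [pathFrom_cons_iff] at hp
    exact ⟨(bEquiv h ⟨f, hp.1⟩).1, (bEquiv h ⟨f, hp.1⟩).2, by rw [Ftrans_cons hp.1]; rfl⟩
  | cons e l ih =>
    intro f q q' h hp
    simp only [List.cons_append] at hp ⊢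
    rw [pathFrom_cons_iff] at hp
    obtain ⟨f', hs, heq⟩ := ih (h := bEquiv_spec h ⟨e, hp.1⟩) hp.2
    refine ⟨f', ?_, ?_⟩
    · rw [Ftrans_cons hp.1, pathTarget_cons]
      exact hs
    · rw [Ftrans_cons (l := l ++ [f]) hp.1, Ftrans_cons (l := l) hp.1, heq]
      simp

lemma Ftrans_inj [Finite A.E] : ∀ (l₁ l₂ : List A.E) {q q' : A.V} (h : A.Sbis q q'),
    A.PathFrom q l₁ → A.PathFrom q l₂ →
    Ftrans l₁ q q' h = Ftrans l₂ q q' h → l₁ = l₂ := by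
  intro l₁
  induction l₁ with
  | nil =>
    intro l₂ q q' h _ hp2 heq
    cases l₂ with
    | nil => rfl
    | cons f l₂ =>
      rw [pathFrom_cons_iff] at hp2
      rw [Ftrans_cons hp2.1] at heq
      exact absurd heq.symm (List.cons_ne_nil _ _)
  | cons e l ih =>
    intro l₂ q q' h hp1 hp2 heq
    cases l₂ with
    | nil =>
      rw [pathFrom_cons_iff] at hp1
      rw [Ftrans_cons hp1.1] at heq
      exact absurd heq (List.cons_ne_nil _ _)
    | cons f l₂ =>
      rw [pathFrom_cons_iff] at hp1 hp2
      rw [Ftrans_cons hp1.1, Ftrans_cons hp2.1] at heq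
      injection heq with hhead htail
      have hE : (⟨e, hp1.1⟩ : A.outE q) = ⟨f, hp2.1⟩ :=
        (bEquiv h).injective (Subtype.ext hhead)
      have hef : e = f := congrArg Subtype.val hE
      subst hef
      exact congrArg (e :: ·) (ih l₂ _ hp1.2 hp2.2 htail)

lemma Ftrans_surj [Finite A.E] : ∀ (l' : List A.E) {q q' : A.V} (h : A.Sbis q q'),
    A.PathFrom q' l' → ∃ l, A.PathFrom q l ∧ Ftrans l q q' h = l' := by
  intro l'
  induction l' with
  | nil =>
    intro q q' h _
    exact ⟨[], A.pathFrom_nil q, rfl⟩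
  | cons f' l' ih =>
    intro q q' h hp
    rw [pathFrom_cons_iff] at hp
    have hmap : bEquiv h ((bEquiv h).symm ⟨f', hp.1⟩) = ⟨f', hp.1⟩ :=
      (bEquiv h).apply_symm_apply _
    have hS : A.Sbis (A.t ((bEquiv h).symm ⟨f', hp.1⟩).1) (A.t f') := by
      have := bEquiv_spec h ((bEquiv h).symm ⟨f', hp.1⟩)
      rwa [hmap] at this
    obtain ⟨l, hl, heq⟩ := ih (h := hS) hp.2
    set eh := (bEquiv h).symm ⟨f', hp.1⟩ with hehdef
    refine ⟨eh.1 :: l, pathFrom_cons_iff.mpr ⟨eh.2, hl⟩, ?_⟩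
    rw [Ftrans_cons eh.2]
    have h1 : (bEquiv h ⟨eh.1, eh.2⟩) = ⟨f', hp.1⟩ := hmap
    have hhead : (bEquiv h ⟨eh.1, eh.2⟩).1 = f' := congrArg Subtype.val h1
    have h2 : A.t (bEquiv h ⟨eh.1, eh.2⟩).1 = A.t f' := by rw [h1]
    have htail := (Ftrans_congr l h2 (bEquiv_spec h ⟨eh.1, eh.2⟩)).trans heq
    exact congrArg₂ (fun a b => a :: b) hhead htail

lemma iso_pathsT_of_Sbis [Finite A.E] {q q' : A.V} (h : A.Sbis q q') :
    RGraph.Iso (A.pathsT q) (A.pathsT q') := by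
  refine ⟨{
    v := fun w => ⟨Ftrans w.1 q q' h, Ftrans_path w.1 h w.2⟩
    e := fun x =>
      ⟨(⟨Ftrans x.1.1.1 q q' h, Ftrans_path x.1.1.1 h x.1.1.2⟩,
        (Ftrans_append x.1.1.1 h (pathFrom_append_single x.1.1.2 x.2)).choose),
       (Ftrans_append x.1.1.1 h (pathFrom_append_single x.1.1.2 x.2)).choose_spec.1⟩
    root_eq := Subtype.ext rfl
    s_eq := fun x => rfl
    t_eq := fun x => by
      apply Subtype.ext
      exact (Ftrans_append x.1.1.1 h (pathFrom_append_single x.1.1.2 x.2)).choose_spec.2.symm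
    }, ⟨?_, ?_⟩, ⟨?_, ?_⟩⟩
  · intro w₁ w₂ hw
    exact Subtype.ext (Ftrans_inj w₁.1 w₂.1 h w₁.2 w₂.2 (congrArg Subtype.val hw))
  · intro w'
    obtain ⟨l, hl, heq⟩ := Ftrans_surj w'.1 h w'.2
    exact ⟨⟨l, hl⟩, Subtype.ext heq⟩
  · intro x₁ x₂ hx
    have hv : Ftrans x₁.1.1.1 q q' h = Ftrans x₂.1.1.1 q q' h :=
      congrArg (fun z => z.1.1.1) hx
    have hfeq : (Ftrans_append x₁.1.1.1 h (pathFrom_append_single x₁.1.1.2 x₁.2)).choose =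
        (Ftrans_append x₂.1.1.1 h (pathFrom_append_single x₂.1.1.2 x₂.2)).choose :=
      congrArg (fun z => z.1.2) hx
    have h1 := (Ftrans_append x₁.1.1.1 h (pathFrom_append_single x₁.1.1.2 x₁.2)).choose_spec.2
    have h2 := (Ftrans_append x₂.1.1.1 h (pathFrom_append_single x₂.1.1.2 x₂.2)).choose_spec.2
    have hfull : Ftrans (x₁.1.1.1 ++ [x₁.1.2]) q q' h =
        Ftrans (x₂.1.1.1 ++ [x₂.1.2]) q q' h := by
      rw [h1, h2]
      exact congrArg₂ (fun a b => a ++ [b]) hv hfeq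
    have hlists : x₁.1.1.1 ++ [x₁.1.2] = x₂.1.1.1 ++ [x₂.1.2] :=
      Ftrans_inj _ _ h (pathFrom_append_single x₁.1.1.2 x₁.2)
        (pathFrom_append_single x₂.1.1.2 x₂.2) hfull
    have hl1 : x₁.1.1.1 = x₂.1.1.1 :=
      Ftrans_inj _ _ h x₁.1.1.2 x₂.1.1.2 hv
    have hletter : x₁.1.2 = x₂.1.2 := by
      rw [hl1] at hlists
      simpa using List.append_cancel_left hlists
    exact Subtype.ext (Prod.ext (Subtype.ext hl1) hletter)
  · intro x'
    have hfull' : A.PathFrom q' (x'.1.1.1 ++ [x'.1.2]) :=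
      pathFrom_append_single x'.1.1.2 x'.2
    obtain ⟨L, hL, heqL⟩ := Ftrans_surj (x'.1.1.1 ++ [x'.1.2]) h hfull'
    have hLne : L ≠ [] := by
      intro hnil
      rw [hnil] at heqL
      exact absurd heqL.symm (by simp)
    obtain ⟨M, g, rfl⟩ := (List.eq_nil_or_concat L).resolve_left hLne
    rw [List.concat_eq_append] at hL heqL
    have hM : A.PathFrom q M ∧ A.PathFrom (A.pathTarget q M) [g] :=
      pathFrom_append_iff.mp hL
    have hg : A.s g = A.pathTarget q M := (pathFrom_cons_iff.mp hM.2).1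
    obtain ⟨f'', hf''s, hf''⟩ := Ftrans_append M h hL
    rw [hf''] at heqL
    have hlen : (Ftrans M q q' h).length = x'.1.1.1.length := by
      have := congrArg List.length heqL
      simp only [List.length_append, List.length_singleton] at this
      omega
    obtain ⟨hM1, hM2⟩ := List.append_inj heqL (by simpa using hlen)
    have hM2' : f'' = x'.1.2 := by simpa using hM2
    refine ⟨⟨(⟨M, hM.1⟩, g), hg⟩, ?_⟩
    apply Subtype.ext
    apply Prod.ext
    · apply Subtype.ext
      exact hM1
    · show (Ftrans_append M h (pathFrom_append_single hM.1 hg)).choose = x'.1.2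
      have hchoose := (Ftrans_append M h (pathFrom_append_single hM.1 hg)).choose_spec.2
      have : Ftrans M q q' h ++
          [(Ftrans_append M h (pathFrom_append_single hM.1 hg)).choose] =
          Ftrans M q q' h ++ [f''] := by rw [← hchoose, ← hf'']
      have := List.append_cancel_left this
      simp only [List.cons.injEq, and_true] at this
      rw [this, hM2']

end RGraph


namespace RGraph

variable {A : RGraph}

lemma head_transport {q q' : A.V} {D : ℕ} (p : GraphHom (A.truncT q D) (A.truncT q' D))
    {a b : A.E} (va : (A.truncT q D).V) (hva : va.1 = [a]) (hpv : (p.v va).1 = [b]) :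
    ∀ (w : (A.truncT q D).V) (m : List A.E), w.1 = a :: m →
      (p.v w).1 = b :: (p.v w).1.tail := by
  intro w m hw
  have hpath : A.PathFrom (A.pathTarget q va.1) m := by
    rw [hva]
    have hw2 := w.2.1
    rw [hw] at hw2
    exact (pathFrom_cons_iff.mp hw2).2
  have hr : (A.truncT q D).Reach va w :=
    reach_truncT_iff.mpr ⟨m, hpath, by rw [hw, hva]; rfl⟩
  obtain ⟨l2, _, h3⟩ := reach_truncT_iff.mp (p.reach_map hr)
  rw [hpv] at h3
  rw [h3]
  rfl

lemma iso_truncT_step {q q' : A.V} {d : ℕ}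
    (p : GraphHom (A.truncT q (d + 1)) (A.truncT q' (d + 1))) (hp : p.IsIso)
    {a b : A.E} (ha : A.s a = q) (hb : A.s b = q')
    (hab : (p.v ⟨[a], pathFrom_cons_iff.mpr ⟨ha, A.pathFrom_nil _⟩,
      Nat.succ_le_succ (Nat.zero_le d)⟩).1 = [b]) :
    RGraph.Iso (A.truncT (A.t a) d) (A.truncT (A.t b) d) := by
  have hq := A.pathFrom_nil
  let va : (A.truncT q (d + 1)).V := ⟨[a], pathFrom_cons_iff.mpr ⟨ha, A.pathFrom_nil _⟩,
    Nat.succ_le_succ (Nat.zero_le d)⟩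
  let vb : (A.truncT q' (d + 1)).V := ⟨[b], pathFrom_cons_iff.mpr ⟨hb, A.pathFrom_nil _⟩,
    Nat.succ_le_succ (Nat.zero_le d)⟩
  have hpva : (p.v va).1 = [b] := hab
  have hpvb : ((p.invHom hp).v vb).1 = [a] := by
    have h1 : vb = p.v va := Subtype.ext hpva.symm
    rw [h1, p.invHom_v_v hp]
  have hhead := head_transport p va rfl hpva
  have hhead' := head_transport (p.invHom hp) vb rfl hpvb
  have hlen : ∀ w, (p.v w).1.length = w.1.length := truncT_hom_length p
  have hlen' : ∀ w, ((p.invHom hp).v w).1.length = w.1.length :=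
    truncT_hom_length (p.invHom hp)
  -- lift of vertices and edges to depth `d+1`
  let W : (A.truncT (A.t a) d).V → (A.truncT q (d + 1)).V := fun l =>
    ⟨a :: l.1, pathFrom_cons_iff.mpr ⟨ha, l.2.1⟩, Nat.succ_le_succ l.2.2⟩
  let X : (A.truncT (A.t a) d).E → (A.truncT q (d + 1)).E := fun x =>
    ⟨(a :: x.1.1, x.1.2), pathFrom_cons_iff.mpr ⟨ha, x.2.1⟩, x.2.2.1,
      Nat.succ_lt_succ x.2.2.2⟩
  have hWX : ∀ x, (A.truncT q (d + 1)).s (X x) =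
      W ((A.truncT (A.t a) d).s x) := fun x => rfl
  have headX : ∀ x, (p.e (X x)).1.1 = b :: (p.e (X x)).1.1.tail := by
    intro x
    have h1 : ((p.e (X x)).1.1 : List A.E) =
        (p.v ((A.truncT q (d + 1)).s (X x))).1 := congrArg Subtype.val (p.s_eq (X x))
    rw [h1]
    exact hhead _ x.1.1 rfl
  refine ⟨{
    v := fun l => ⟨(p.v (W l)).1.tail, ?_, ?_⟩
    e := fun x => ⟨((p.e (X x)).1.1.tail, (p.e (X x)).1.2), ?_, ?_, ?_⟩
    root_eq := ?_
    s_eq := ?_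
    t_eq := ?_ }, ⟨?_, ?_⟩, ⟨?_, ?_⟩⟩
  · -- vertex: path property
    have hh := hhead (W l) l.1 rfl
    have hpw := (p.v (W l)).2.1
    rw [hh] at hpw
    exact (pathFrom_cons_iff.mp hpw).2
  · -- vertex: length property
    have hh := hhead (W l) l.1 rfl
    have h1 := hlen (W l)
    have h2 := congrArg List.length hh
    have h3 := l.2.2
    simp only [W, List.length_cons] at h1 h2 ⊢
    omega
  · -- edge: path property
    have hh := headX x
    have hpw := (p.e (X x)).2.1
    rw [hh] at hpw
    exact (pathFrom_cons_iff.mp hpw).2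
  · -- edge: source property
    have hh := headX x
    have h1 := (p.e (X x)).2.2.1
    rw [hh] at h1
    rw [pathTarget_cons] at h1
    exact h1
  · -- edge: length property
    show ((p.e (X x)).1.1.tail).length < d
    have hh := headX x
    have h1 : ((p.e (X x)).1.1 : List A.E) =
        (p.v ((A.truncT q (d + 1)).s (X x))).1 := congrArg Subtype.val (p.s_eq (X x))
    have h2 := hlen ((A.truncT q (d + 1)).s (X x))
    have h3 := congrArg List.length hh
    have h4 := congrArg List.length h1
    have h5 : ((A.truncT q (d + 1)).s (X x)).1.length = x.1.1.length + 1 := by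
      show (a :: x.1.1).length = x.1.1.length + 1
      simp
    have h6 := x.2.2.2
    simp only [List.length_cons] at h3
    omega
  · -- root_eq
    apply Subtype.ext
    show ((p.v (W ⟨[], A.pathFrom_nil _, Nat.zero_le d⟩)).1).tail = []
    have : W ⟨[], A.pathFrom_nil _, Nat.zero_le d⟩ = va := Subtype.ext rfl
    rw [this, hpva]
    rfl
  · -- s_eq
    intro x
    apply Subtype.ext
    exact congrArg List.tail (congrArg Subtype.val (p.s_eq (X x)))
  · -- t_eq
    intro x
    apply Subtype.ext
    have h2 : ((p.e (X x)).1.1 ++ [(p.e (X x)).1.2] : List A.E) =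
        (p.v ((A.truncT q (d + 1)).t (X x))).1 := congrArg Subtype.val (p.t_eq (X x))
    show ((p.e (X x)).1.1).tail ++ [(p.e (X x)).1.2] =
      ((p.v ((A.truncT q (d + 1)).t (X x))).1).tail
    rw [← h2]
    rw [headX x]
    simp
  · -- v injective
    intro l₁ l₂ h12
    have ht : ((p.v (W l₁)).1).tail = ((p.v (W l₂)).1).tail := congrArg Subtype.val h12
    have hfull : (p.v (W l₁)).1 = (p.v (W l₂)).1 := by
      rw [hhead (W l₁) l₁.1 rfl, hhead (W l₂) l₂.1 rfl, ht]
    have hW : W l₁ = W l₂ := hp.1.1 (Subtype.ext hfull)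
    have : a :: l₁.1 = a :: l₂.1 := congrArg Subtype.val hW
    exact Subtype.ext (by injection this)
  · -- v surjective
    intro l'
    let w' : (A.truncT q' (d + 1)).V := ⟨b :: l'.1, pathFrom_cons_iff.mpr ⟨hb, l'.2.1⟩,
      Nat.succ_le_succ l'.2.2⟩
    have hw' := hhead' w' l'.1 rfl
    have hprop1 : A.PathFrom (A.t a) (((p.invHom hp).v w').1.tail) := by
      have hpw := ((p.invHom hp).v w').2.1
      rw [hw'] at hpw
      exact (pathFrom_cons_iff.mp hpw).2
    have hprop2 : (((p.invHom hp).v w').1.tail).length ≤ d := by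
      have h1 := hlen' w'
      have h2 := congrArg List.length hw'
      have h3 := l'.2.2
      simp only [w', List.length_cons] at h1 h2 ⊢
      omega
    refine ⟨⟨((p.invHom hp).v w').1.tail, hprop1, hprop2⟩, ?_⟩
    apply Subtype.ext
    have hWw : W ⟨((p.invHom hp).v w').1.tail, hprop1, hprop2⟩ = (p.invHom hp).v w' :=
      Subtype.ext hw'.symm
    show ((p.v (W ⟨((p.invHom hp).v w').1.tail, hprop1, hprop2⟩)).1).tail = l'.1
    rw [hWw, p.v_invHom_v hp]
    rfl
  · -- e injective
    intro x₁ x₂ h12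
    have ht : ((p.e (X x₁)).1.1).tail = ((p.e (X x₂)).1.1).tail :=
      congrArg (fun z => z.1.1) h12
    have hl : (p.e (X x₁)).1.2 = (p.e (X x₂)).1.2 := congrArg (fun z => z.1.2) h12
    have hfull : (p.e (X x₁)).1.1 = (p.e (X x₂)).1.1 := by
      rw [headX x₁, headX x₂, ht]
    have hX : X x₁ = X x₂ := hp.2.1 (Subtype.ext (Prod.ext hfull hl))
    have h1 : a :: x₁.1.1 = a :: x₂.1.1 := congrArg (fun z => z.1.1) hX
    have h2 : x₁.1.2 = x₂.1.2 := congrArg (fun z => z.1.2) hX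
    exact Subtype.ext (Prod.ext (by injection h1) h2)
  · -- e surjective
    intro x'
    let X' : (A.truncT q' (d + 1)).E := ⟨(b :: x'.1.1, x'.1.2),
      pathFrom_cons_iff.mpr ⟨hb, x'.2.1⟩, x'.2.2.1, Nat.succ_lt_succ x'.2.2.2⟩
    let Y₀ := (p.invHom hp).e X'
    have hY₀1 : (Y₀.1.1 : List A.E) =
        ((p.invHom hp).v ((A.truncT q' (d + 1)).s X')).1 :=
      congrArg Subtype.val ((p.invHom hp).s_eq X')
    have hY₀head : (Y₀.1.1 : List A.E) = a :: Y₀.1.1.tail := by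
      rw [hY₀1]
      exact hhead' _ x'.1.1 rfl
    have hY₀len : (Y₀.1.1 : List A.E).length = x'.1.1.length + 1 := by
      rw [hY₀1, hlen']
      show (b :: x'.1.1).length = x'.1.1.length + 1
      simp
    have hprop1 : A.PathFrom (A.t a) (Y₀.1.1 : List A.E).tail := by
      have hpw := Y₀.2.1
      rw [hY₀head] at hpw
      exact (pathFrom_cons_iff.mp hpw).2
    have hprop2 : A.s Y₀.1.2 = A.pathTarget (A.t a) (Y₀.1.1 : List A.E).tail := by
      have h1 := Y₀.2.2.1
      rw [hY₀head, pathTarget_cons] at h1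
      exact h1
    have hprop3 : ((Y₀.1.1 : List A.E).tail).length < d := by
      have := congrArg List.length hY₀head
      simp only [List.length_cons] at this
      have h6 := x'.2.2.2
      omega
    refine ⟨⟨(Y₀.1.1.tail, Y₀.1.2), hprop1, hprop2, hprop3⟩, ?_⟩
    apply Subtype.ext
    have hXY : X ⟨(Y₀.1.1.tail, Y₀.1.2), hprop1, hprop2, hprop3⟩ = Y₀ :=
      Subtype.ext (Prod.ext hY₀head.symm rfl)
    show ((p.e (X ⟨(Y₀.1.1.tail, Y₀.1.2), hprop1, hprop2, hprop3⟩)).1.1.tail,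
      (p.e (X ⟨(Y₀.1.1.tail, Y₀.1.2), hprop1, hprop2, hprop3⟩)).1.2) = x'.1
    rw [hXY, p.e_invHom_e hp]
    rfl

end RGraph


namespace RGraph

variable {A : RGraph}

lemma R_of_iso_truncT : ∀ (d : ℕ) (q q' : A.V),
    RGraph.Iso (A.truncT q d) (A.truncT q' d) → A.R d q q' := by
  intro d
  induction d with
  | zero => intro q q' _; trivial
  | succ d ih =>
    rintro q q' ⟨p, hp⟩
    let xe : A.outE q → (A.truncT q (d + 1)).E := fun e =>
      ⟨([], e.1), A.pathFrom_nil q, e.2, Nat.succ_pos d⟩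
    let xe' : A.outE q' → (A.truncT q' (d + 1)).E := fun e =>
      ⟨([], e.1), A.pathFrom_nil q', e.2, Nat.succ_pos d⟩
    have hfirst : ∀ e : A.outE q, ((p.e (xe e)).1.1 : List A.E) = [] := by
      intro e
      have h1 : ((p.e (xe e)).1.1 : List A.E) =
          (p.v ((A.truncT q (d + 1)).s (xe e))).1 :=
        congrArg Subtype.val (p.s_eq (xe e))
      have h3 : (A.truncT q (d + 1)).s (xe e) = (A.truncT q (d + 1)).root :=
        Subtype.ext rfl
      rw [h1, h3]
      exact congrArg Subtype.val p.root_eq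
    have hfirst' : ∀ e : A.outE q', (((p.invHom hp).e (xe' e)).1.1 : List A.E) = [] := by
      intro e
      have h1 : (((p.invHom hp).e (xe' e)).1.1 : List A.E) =
          ((p.invHom hp).v ((A.truncT q' (d + 1)).s (xe' e))).1 :=
        congrArg Subtype.val ((p.invHom hp).s_eq (xe' e))
      have h3 : (A.truncT q' (d + 1)).s (xe' e) = (A.truncT q' (d + 1)).root :=
        Subtype.ext rfl
      rw [h1, h3]
      exact congrArg Subtype.val (p.invHom hp).root_eq
    have hse : ∀ e : A.outE q, A.s (p.e (xe e)).1.2 = q' := by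
      intro e
      have h1 := (p.e (xe e)).2.2.1
      rw [hfirst e] at h1
      simpa using h1
    have hse' : ∀ e : A.outE q', A.s ((p.invHom hp).e (xe' e)).1.2 = q := by
      intro e
      have h1 := ((p.invHom hp).e (xe' e)).2.2.1
      rw [hfirst' e] at h1
      simpa using h1
    let eps : A.outE q → A.outE q' := fun e => ⟨(p.e (xe e)).1.2, hse e⟩
    let eps' : A.outE q' → A.outE q := fun e => ⟨((p.invHom hp).e (xe' e)).1.2, hse' e⟩
    have hxe : ∀ e : A.outE q, xe' (eps e) = p.e (xe e) := fun e =>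
      Subtype.ext (Prod.ext (hfirst e).symm rfl)
    have hxe' : ∀ e : A.outE q', xe (eps' e) = (p.invHom hp).e (xe' e) := fun e =>
      Subtype.ext (Prod.ext (hfirst' e).symm rfl)
    have hleft : ∀ e : A.outE q, eps' (eps e) = e := by
      intro e
      apply Subtype.ext
      show ((p.invHom hp).e (xe' (eps e))).1.2 = e.1
      rw [hxe e, p.invHom_e_e hp]
    have hright : ∀ e : A.outE q', eps (eps' e) = e := by
      intro e
      apply Subtype.ext
      show (p.e (xe (eps' e))).1.2 = e.1
      rw [hxe' e, p.e_invHom_e hp]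
    refine ⟨⟨eps, eps', hleft, hright⟩, ?_⟩
    intro e
    apply ih
    have h1 : (A.truncT q (d + 1)).t (xe e) =
        ⟨[e.1], pathFrom_cons_iff.mpr ⟨e.2, A.pathFrom_nil _⟩,
          Nat.succ_le_succ (Nat.zero_le d)⟩ := Subtype.ext rfl
    have h2 : (p.v ⟨[e.1], pathFrom_cons_iff.mpr ⟨e.2, A.pathFrom_nil _⟩,
        Nat.succ_le_succ (Nat.zero_le d)⟩).1 = [(eps e).1] := by
      rw [← h1]
      have h3 : (((A.truncT q' (d + 1)).t (p.e (xe e))).1 : List A.E) =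
          (p.v ((A.truncT q (d + 1)).t (xe e))).1 :=
        congrArg Subtype.val (p.t_eq (xe e))
      rw [← h3]
      show (p.e (xe e)).1.1 ++ [(p.e (xe e)).1.2] = [(eps e).1]
      rw [hfirst e]
      rfl
    exact iso_truncT_step p hp e.2 (eps e).2 h2

end RGraph

/-- Let `A` be a finite connected graph with vertex set `Q` and
`T = T_A` its universal covering tree. For vertices `v₁, v₂` of `T` the following are
equivalent: (i) `T_{v₁} ≅ T_{v₂}`; (ii) `T_{v₁}^{(d)} ≅ T_{v₂}^{(d)}` for all `d`;
(iii) `T_{v₁}^{(d)} ≅ T_{v₂}^{(d)}` for some `d ≥ (|Q| + 1)²`. -/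
theorem stmt12 (A : RGraph) (hfinV : Finite A.V) (hfinE : Finite A.E)
    (hconn : A.Connected) (v₁ v₂ : A.cover.V) :
    (RGraph.Iso (A.cover.subgraph v₁) (A.cover.subgraph v₂) ↔
      ∀ d : ℕ, RGraph.Iso (A.cover.trunc v₁ d) (A.cover.trunc v₂ d)) ∧
    (RGraph.Iso (A.cover.subgraph v₁) (A.cover.subgraph v₂) ↔
      ∃ d : ℕ, (Nat.card A.V + 1) ^ 2 ≤ d ∧
        RGraph.Iso (A.cover.trunc v₁ d) (A.cover.trunc v₂ d)) := by
  letI : Finite A.V := hfinV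
  letI : Finite A.E := hfinE
  have hb1 : ∀ v : A.cover.V, RGraph.Iso (A.cover.subgraph v)
      (A.pathsT (A.pathTarget A.root v.1)) := fun v => RGraph.subgraph_pathsT_iso A.root v
  have hb2 : ∀ (v : A.cover.V) (d : ℕ), RGraph.Iso (A.cover.trunc v d)
      (A.truncT (A.pathTarget A.root v.1) d) := fun v d => RGraph.trunc_pathsT_iso A.root v d
  set q₁ := A.pathTarget A.root v₁.1 with hq₁
  set q₂ := A.pathTarget A.root v₂.1 with hq₂
  have key1 : RGraph.Iso (A.cover.subgraph v₁) (A.cover.subgraph v₂) ↔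
      RGraph.Iso (A.pathsT q₁) (A.pathsT q₂) := by
    constructor
    · intro h
      exact ((hb1 v₁).symm.trans h).trans (hb1 v₂)
    · intro h
      exact ((hb1 v₁).trans h).trans (hb1 v₂).symm
  have key2 : ∀ d, RGraph.Iso (A.cover.trunc v₁ d) (A.cover.trunc v₂ d) ↔
      RGraph.Iso (A.truncT q₁ d) (A.truncT q₂ d) := by
    intro d
    constructor
    · intro h
      exact ((hb2 v₁ d).symm.trans h).trans (hb2 v₂ d)
    · intro h
      exact ((hb2 v₁ d).trans h).trans (hb2 v₂ d).symm
  have fwd : RGraph.Iso (A.cover.subgraph v₁) (A.cover.subgraph v₂) →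
      ∀ d, RGraph.Iso (A.cover.trunc v₁ d) (A.cover.trunc v₂ d) := by
    intro h d
    exact (key2 d).mpr (RGraph.iso_truncT_of_iso_pathsT (key1.mp h) d)
  have bwd : ∀ d, (Nat.card A.V) ^ 2 ≤ d →
      RGraph.Iso (A.cover.trunc v₁ d) (A.cover.trunc v₂ d) →
      RGraph.Iso (A.cover.subgraph v₁) (A.cover.subgraph v₂) := by
    intro d hd h
    have hR : A.R d q₁ q₂ := RGraph.R_of_iso_truncT d q₁ q₂ ((key2 d).mp h)
    have hS : A.Sbis q₁ q₂ := RGraph.Sbis_of_R_big hd hR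
    exact key1.mpr (RGraph.iso_pathsT_of_Sbis hS)
  have hle : (Nat.card A.V) ^ 2 ≤ (Nat.card A.V + 1) ^ 2 :=
    Nat.pow_le_pow_left (Nat.le_succ _) 2
  constructor
  · constructor
    · exact fwd
    · intro h
      exact bwd ((Nat.card A.V + 1) ^ 2) hle (h _)
  · constructor
    · intro h
      exact ⟨(Nat.card A.V + 1) ^ 2, le_rfl, fwd h _⟩
    · rintro ⟨d, hd, h⟩
      exact bwd d (le_trans hle hd) h
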